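/- Suppose functions μ, π : [n] → ℝ≥0 with ∑_T π(T) ≤ 1 satisfy ∑_{T=t}^{b} μ(T) ≤ ∑_{T=t}^{n} (b/T)·π(T) for all 1 ≤ t ≤ b ≤ n, and suppose nonnegative reals x(t,b) (1 ≤ t, b ≤ n) and β satisfy ∑_{b=1}^{n} (b/T)·∑_{t=1}^{T} x(t,b) ≤ β and ∑_{b=T}^{n} ∑_{t=1}^{T} x(t,b) ≥ 1 for all T ∈ [n]. Then β ≥ ∑_{T=1}^{n} μ(T). -/
import Mathlib


/-- Weak LP duality for the online-bidding linear program: if `(μ, π)` is dual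
feasible (`∑ π ≤ 1` and `∑_{T=t}^b μ T ≤ ∑_{T=t}^n (b/T) π T` for all
`1 ≤ t ≤ b ≤ n`) and `(x, β)` is primal feasible
(`∑_b (b/T) ∑_{t≤T} x t b ≤ β` and `∑_{b≥T} ∑_{t≤T} x t b ≥ 1` for all
`T ∈ [n]`, `x ≥ 0`), then `β ≥ ∑ μ`. -/
theorem stmt19 (n : ℕ) (hn : 1 ≤ n) (μ π : ℕ → ℝ)
    (hμ : ∀ T, 0 ≤ μ T) (hπ : ∀ T, 0 ≤ π T)
    (hπ1 : ∑ T ∈ Finset.Icc 1 n, π T ≤ 1)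
    (hdual : ∀ t b, 1 ≤ t → t ≤ b → b ≤ n →
      ∑ T ∈ Finset.Icc t b, μ T ≤ ∑ T ∈ Finset.Icc t n, ((b : ℝ) / T) * π T)
    (x : ℕ → ℕ → ℝ) (hx : ∀ t b, 0 ≤ x t b) (β : ℝ)
    (hprim1 : ∀ T ∈ Finset.Icc 1 n,
      ∑ b ∈ Finset.Icc 1 n, ((b : ℝ) / T) * ∑ t ∈ Finset.Icc 1 T, x t b ≤ β)
    (hprim2 : ∀ T ∈ Finset.Icc 1 n,
      1 ≤ ∑ b ∈ Finset.Icc T n, ∑ t ∈ Finset.Icc 1 T, x t b) :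
    ∑ T ∈ Finset.Icc 1 n, μ T ≤ β := by
  set A := Finset.Icc 1 n with hA
  -- rewrite a sum over Icc a b as an ite-sum over A
  have hIcc : ∀ (a b : ℕ), 1 ≤ a → b ≤ n → ∀ f : ℕ → ℝ,
      ∑ T ∈ Finset.Icc a b, f T = ∑ T ∈ A, if a ≤ T ∧ T ≤ b then f T else 0 := by
    intro a b ha hb f
    rw [← Finset.sum_filter]
    apply Finset.sum_congr _ (fun _ _ => rfl)
    ext T
    simp only [Finset.mem_filter, Finset.mem_Icc, hA]
    omega
  have hβ0 : 0 ≤ β := by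
    refine le_trans (Finset.sum_nonneg fun b _ => ?_) (hprim1 1 (by simp [hA, hn]))
    exact mul_nonneg (div_nonneg (Nat.cast_nonneg _) (Nat.cast_nonneg _))
      (Finset.sum_nonneg fun t _ => hx t b)
  calc ∑ T ∈ A, μ T
      ≤ ∑ T ∈ A, μ T * (∑ b ∈ Finset.Icc T n, ∑ t ∈ Finset.Icc 1 T, x t b) := by
        refine Finset.sum_le_sum fun T hT => ?_
        exact le_mul_of_one_le_right (hμ T) (hprim2 T hT)
    _ = ∑ T ∈ A, ∑ b ∈ A, ∑ t ∈ A,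
          (if t ≤ T ∧ T ≤ b then μ T * x t b else 0) := by
        refine Finset.sum_congr rfl fun T hT => ?_
        simp only [hA, Finset.mem_Icc] at hT
        rw [hIcc T n hT.1 le_rfl]
        rw [Finset.mul_sum]
        refine Finset.sum_congr rfl fun b hb => ?_
        simp only [hA, Finset.mem_Icc] at hb
        rw [hIcc 1 T le_rfl hT.2]
        rw [mul_ite, mul_zero, Finset.mul_sum]
        split_ifs with h
        · refine Finset.sum_congr rfl fun t ht => ?_
          simp only [hA, Finset.mem_Icc] at ht
          rw [mul_ite, mul_zero]
          split_ifs <;> first | rfl | (exfalso; omega)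
        · refine (Finset.sum_eq_zero fun t ht => ?_).symm
          exact if_neg (by omega)
    _ = ∑ b ∈ A, ∑ t ∈ A, (∑ T ∈ Finset.Icc t b, μ T) * x t b := by
        rw [Finset.sum_comm]
        refine Finset.sum_congr rfl fun b hb => ?_
        rw [Finset.sum_comm]
        refine Finset.sum_congr rfl fun t ht => ?_
        simp only [hA, Finset.mem_Icc] at hb ht
        rw [hIcc t b ht.1 hb.2, Finset.sum_mul]
        refine Finset.sum_congr rfl fun T hT => ?_
        rw [ite_mul, zero_mul]
    _ ≤ ∑ b ∈ A, ∑ t ∈ A, (∑ T ∈ Finset.Icc t n, ((b : ℝ) / T) * π T) * x t b := by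
        refine Finset.sum_le_sum fun b hb => Finset.sum_le_sum fun t ht => ?_
        simp only [hA, Finset.mem_Icc] at hb ht
        refine mul_le_mul_of_nonneg_right ?_ (hx t b)
        by_cases h : t ≤ b
        · exact hdual t b ht.1 h hb.2
        · rw [Finset.Icc_eq_empty (by omega), Finset.sum_empty]
          exact Finset.sum_nonneg fun T _ =>
            mul_nonneg (div_nonneg (Nat.cast_nonneg _) (Nat.cast_nonneg _)) (hπ T)
    _ = ∑ T ∈ A, π T * (∑ b ∈ A, ((b : ℝ) / T) * ∑ t ∈ Finset.Icc 1 T, x t b) := by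
        have L : ∀ b ∈ A, ∀ t ∈ A,
            (∑ T ∈ Finset.Icc t n, ((b : ℝ) / T) * π T) * x t b
              = ∑ T ∈ A, if t ≤ T then ((b : ℝ) / T) * π T * x t b else 0 := by
          intro b hb t ht
          simp only [hA, Finset.mem_Icc] at hb ht
          rw [hIcc t n ht.1 le_rfl, Finset.sum_mul]
          refine Finset.sum_congr rfl fun T hT => ?_
          simp only [hA, Finset.mem_Icc] at hT
          rw [ite_mul, zero_mul]
          split_ifs <;> first | rfl | (exfalso; omega)
        calc ∑ b ∈ A, ∑ t ∈ A, (∑ T ∈ Finset.Icc t n, ((b : ℝ) / T) * π T) * x t b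
            = ∑ b ∈ A, ∑ t ∈ A, ∑ T ∈ A,
                (if t ≤ T then ((b : ℝ) / T) * π T * x t b else 0) :=
              Finset.sum_congr rfl fun b hb =>
                Finset.sum_congr rfl fun t ht => L b hb t ht
          _ = ∑ T ∈ A, ∑ b ∈ A, ∑ t ∈ A,
                (if t ≤ T then ((b : ℝ) / T) * π T * x t b else 0) := by
              refine (Finset.sum_congr rfl fun b _ => Finset.sum_comm).trans ?_
              exact Finset.sum_comm
          _ = ∑ T ∈ A, π T * (∑ b ∈ A, ((b : ℝ) / T) * ∑ t ∈ Finset.Icc 1 T, x t b) := by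
              refine Finset.sum_congr rfl fun T hT => ?_
              simp only [hA, Finset.mem_Icc] at hT
              rw [Finset.mul_sum]
              refine Finset.sum_congr rfl fun b hb => ?_
              simp only [hA, Finset.mem_Icc] at hb
              rw [hIcc 1 T le_rfl hT.2, Finset.mul_sum, Finset.mul_sum]
              refine Finset.sum_congr rfl fun t ht => ?_
              simp only [hA, Finset.mem_Icc] at ht
              rw [mul_ite, mul_ite, mul_zero, mul_zero]
              split_ifs <;> first | (exfalso; omega) | ring
    _ ≤ ∑ T ∈ A, π T * β := by
        refine Finset.sum_le_sum fun T hT => mul_le_mul_of_nonneg_left (hprim1 T hT) (hπ T)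
    _ ≤ β := by
        rw [← Finset.sum_mul]
        calc (∑ T ∈ A, π T) * β ≤ 1 * β := mul_le_mul_of_nonneg_right hπ1 hβ0
          _ = β := one_mul β
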